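/- For all n ≥ 0, b_n = Σ_{i=0}^{⌊n/2⌋} ⌊(n-1-2i)²/4⌋·|B(i)|. -/
import Mathlib

/-- `pre2 s` is the multiset of all pairwise products of two distinct entries
(by position) of the multiset `s`, i.e. the summands of `e₂` evaluated at `s`. -/
def pre2 (s : Multiset ℕ) : Multiset ℕ := (Multiset.powersetCard 2 s).map Multiset.prod

open Classical in
/-- The finset of binary partitions of `n`: partitions all of whose parts are powers of 2. -/
noncomputable def binaryPartitions (n : ℕ) : Finset (Nat.Partition n) :=
  Finset.univ.filter fun l => ∀ p ∈ l.parts, ∃ i : ℕ, p = 2 ^ i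

/-- `b n = m₂(ImB₂(n))`: the total number of parts equal to 2 in the image of `pre2`
on binary partitions of `n` with at least two parts; by injectivity this equals
`∑_{λ ∈ B(n)} m₁(λ)·m₂(λ)`. -/
noncomputable def b (n : ℕ) : ℕ :=
  ∑ l ∈ binaryPartitions n, (l.parts.count 1) * (l.parts.count 2)

lemma mem_bp {n : ℕ} {l : Nat.Partition n} :
    l ∈ binaryPartitions n ↔ ∀ p ∈ l.parts, ∃ i : ℕ, p = 2 ^ i := by
  simp [binaryPartitions]

lemma binary_part_even {p : ℕ} (hp : ∃ k, p = 2 ^ k) (h1 : 1 < p) :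
    ∃ q, p = 2 * q ∧ ∃ k, q = 2 ^ k := by
  obtain ⟨k, rfl⟩ := hp
  cases k with
  | zero => simp at h1
  | succ k => exact ⟨2 ^ k, by rw [pow_succ]; ring, k, rfl⟩

/-- the map `λ ↦ (i, ν)` where `ν = (λ minus its ones)/2`. -/
noncomputable def toSigma (n : ℕ) (l : Nat.Partition n) : Σ i : ℕ, Nat.Partition i :=
  ⟨((l.parts.filter (1 < ·)).map (· / 2)).sum,
   { parts := (l.parts.filter (1 < ·)).map (· / 2),
     parts_pos := by
       intro q hq
       obtain ⟨p, hp, rfl⟩ := Multiset.mem_map.mp hq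
       have := (Multiset.mem_filter.mp hp).2
       omega
     parts_sum := rfl }⟩

/-- the map `(i, ν) ↦ 1^{n-2i} + 2·ν`. -/
noncomputable def ofSigma (n : ℕ) (x : Σ i : ℕ, Nat.Partition i) (hx : 2 * x.1 ≤ n) :
    Nat.Partition n where
  parts := Multiset.replicate (n - 2 * x.1) 1 + x.2.parts.map (2 * ·)
  parts_pos := by
    intro p hp
    rcases Multiset.mem_add.mp hp with h | h
    · rw [Multiset.eq_of_mem_replicate h]; norm_num
    · obtain ⟨q, hq, rfl⟩ := Multiset.mem_map.mp h
      have := x.2.parts_pos hq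
      omega
  parts_sum := by
    have h2 : (x.2.parts.map (2 * ·)).sum = 2 * x.2.parts.sum := by
      simpa using Multiset.sum_map_mul_left (a := 2) (f := id) (s := x.2.parts)
    rw [Multiset.sum_add, Multiset.sum_replicate, h2, x.2.parts_sum]
    simp only [smul_eq_mul, mul_one]
    omega

lemma aux_even {n : ℕ} {l : Nat.Partition n} (hl : l ∈ binaryPartitions n) :
    ∀ p ∈ l.parts.filter (1 < ·), 2 * (p / 2) = p := by
  intro p hp
  have h1 := (Multiset.mem_filter.mp hp).2
  have hb := (mem_bp.mp hl) p (Multiset.mem_filter.mp hp).1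
  obtain ⟨q, rfl, -⟩ := binary_part_even hb h1
  omega

lemma aux_two_sum {n : ℕ} {l : Nat.Partition n} (hl : l ∈ binaryPartitions n) :
    2 * ((l.parts.filter (1 < ·)).map (· / 2)).sum = (l.parts.filter (1 < ·)).sum := by
  have h1 : ((l.parts.filter (1 < ·)).map (fun p => 2 * (p / 2))).sum
      = 2 * ((l.parts.filter (1 < ·)).map (· / 2)).sum :=
    Multiset.sum_map_mul_left (a := 2) (f := (· / 2)) (s := l.parts.filter (1 < ·))
  rw [← h1, Multiset.map_congr rfl (aux_even hl), Multiset.map_id']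

lemma aux_filter_sum_le {n : ℕ} (l : Nat.Partition n) :
    (l.parts.filter (1 < ·)).sum ≤ n := by
  have := Multiset.filter_add_not (1 < ·) l.parts
  have h := congrArg Multiset.sum this
  rw [Multiset.sum_add, l.parts_sum] at h
  omega

lemma aux_filter_not {n : ℕ} (l : Nat.Partition n) :
    l.parts.filter (fun p => ¬ 1 < p)
      = Multiset.replicate (Multiset.card (l.parts.filter (fun p => ¬ 1 < p))) 1 := by
  rw [Multiset.eq_replicate]
  refine ⟨rfl, fun p hp => ?_⟩
  have h1 := (Multiset.mem_filter.mp hp).2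
  have h2 := l.parts_pos (Multiset.mem_filter.mp hp).1
  omega

lemma aux_card_filter_not {n : ℕ} {l : Nat.Partition n} (hl : l ∈ binaryPartitions n) :
    Multiset.card (l.parts.filter (fun p => ¬ 1 < p))
      = n - 2 * ((l.parts.filter (1 < ·)).map (· / 2)).sum := by
  have hsplit := Multiset.filter_add_not (1 < ·) l.parts
  have h := congrArg Multiset.sum hsplit
  rw [Multiset.sum_add, l.parts_sum] at h
  have hone : (l.parts.filter (fun p => ¬ 1 < p)).sum
      = Multiset.card (l.parts.filter (fun p => ¬ 1 < p)) := by
    conv_lhs => rw [aux_filter_not l]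
    simp [Multiset.sum_replicate]
  rw [aux_two_sum hl]
  omega

-- membership of toSigma in the sigma finset
lemma toSigma_mem {n : ℕ} {l : Nat.Partition n} (hl : l ∈ binaryPartitions n) :
    toSigma n l ∈ (Finset.range (n / 2 + 1)).sigma (fun i => binaryPartitions i) := by
  rw [Finset.mem_sigma]
  constructor
  · rw [Finset.mem_range]
    have h1 := aux_two_sum hl
    have h2 := aux_filter_sum_le l
    simp only [toSigma]
    omega
  · rw [mem_bp]
    intro q hq
    simp only [toSigma] at hq
    obtain ⟨p, hp, rfl⟩ := Multiset.mem_map.mp hq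
    have h1 := (Multiset.mem_filter.mp hp).2
    have hb := (mem_bp.mp hl) p (Multiset.mem_filter.mp hp).1
    obtain ⟨r, hpr, k, rfl⟩ := binary_part_even hb h1
    exact ⟨k, by omega⟩

lemma ofSigma_mem {n : ℕ} (x : Σ i : ℕ, Nat.Partition i) (hx : 2 * x.1 ≤ n)
    (hb : x.2 ∈ binaryPartitions x.1) : ofSigma n x hx ∈ binaryPartitions n := by
  rw [mem_bp]
  intro p hp
  simp only [ofSigma] at hp
  rcases Multiset.mem_add.mp hp with h | h
  · exact ⟨0, by rw [Multiset.eq_of_mem_replicate h]; norm_num⟩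
  · obtain ⟨q, hq, rfl⟩ := Multiset.mem_map.mp h
    obtain ⟨k, rfl⟩ := (mem_bp.mp hb) q hq
    exact ⟨k + 1, by rw [pow_succ]; ring⟩

lemma partition_sigma_ext {x y : Σ i : ℕ, Nat.Partition i} (h1 : x.1 = y.1)
    (h2 : x.2.parts = y.2.parts) : x = y := by
  obtain ⟨a, p⟩ := x
  obtain ⟨b, q⟩ := y
  dsimp at h1
  subst h1
  dsimp at h2
  rw [Nat.Partition.ext_iff.mpr h2]

lemma left_inv {n : ℕ} (l : Nat.Partition n) (hl : l ∈ binaryPartitions n)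
    (h2 : 2 * (toSigma n l).1 ≤ n) : ofSigma n (toSigma n l) h2 = l := by
  apply Nat.Partition.ext
  simp only [ofSigma, toSigma]
  have hmm : ((l.parts.filter (1 < ·)).map (· / 2)).map (2 * ·) = l.parts.filter (1 < ·) := by
    rw [Multiset.map_map]
    have := Multiset.map_congr (f := (2 * ·) ∘ (· / 2)) (g := id) rfl
      (fun p hp => by simpa using aux_even hl p hp)
    rw [this, Multiset.map_id]
  rw [hmm, ← aux_card_filter_not hl, ← aux_filter_not l]
  rw [add_comm]
  exact Multiset.filter_add_not _ _

lemma right_inv {n : ℕ} (x : Σ i : ℕ, Nat.Partition i) (hx : 2 * x.1 ≤ n)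
    (hb : x.2 ∈ binaryPartitions x.1) : toSigma n (ofSigma n x hx) = x := by
  have hparts : ((ofSigma n x hx).parts.filter (1 < ·)).map (· / 2) = x.2.parts := by
    simp only [ofSigma]
    rw [Multiset.filter_add]
    have h1 : (Multiset.replicate (n - 2 * x.1) 1).filter (1 < ·) = 0 := by
      rw [Multiset.filter_eq_nil]
      intro a ha
      rw [Multiset.eq_of_mem_replicate ha]
      omega
    have h2 : (x.2.parts.map (2 * ·)).filter (1 < ·) = x.2.parts.map (2 * ·) := by
      rw [Multiset.filter_eq_self]
      intro a ha
      obtain ⟨q, hq, rfl⟩ := Multiset.mem_map.mp ha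
      have := x.2.parts_pos hq
      omega
    rw [h1, h2, zero_add, Multiset.map_map]
    have : ∀ q ∈ x.2.parts, ((· / 2) ∘ (2 * ·)) q = id q := by
      intro q hq
      show 2 * q / 2 = q
      omega
    rw [Multiset.map_congr rfl this, Multiset.map_id]
  apply partition_sigma_ext
  · simp only [toSigma]
    rw [hparts, x.2.parts_sum]
  · simp only [toSigma]
    rw [hparts]

lemma count_ofSigma_one {n : ℕ} (x : Σ i : ℕ, Nat.Partition i) (hx : 2 * x.1 ≤ n) :
    (ofSigma n x hx).parts.count 1 = n - 2 * x.1 := by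
  simp only [ofSigma]
  rw [Multiset.count_add, Multiset.count_replicate]
  have : (x.2.parts.map (2 * ·)).count 1 = 0 := by
    rw [Multiset.count_eq_zero]
    intro h
    obtain ⟨q, hq, hq2⟩ := Multiset.mem_map.mp h
    omega
  simp [this]

lemma count_ofSigma_two {n : ℕ} (x : Σ i : ℕ, Nat.Partition i) (hx : 2 * x.1 ≤ n) :
    (ofSigma n x hx).parts.count 2 = x.2.parts.count 1 := by
  simp only [ofSigma]
  rw [Multiset.count_add, Multiset.count_replicate]
  have h2 : (x.2.parts.map (2 * ·)).count 2 = x.2.parts.count 1 := by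
    have := Multiset.count_map_eq_count' (2 * ·) x.2.parts
      (fun a b hab => by dsimp at hab; omega) 1
    simpa using this
  simp [h2]

/-- Step A : `b n = ∑_{i ≤ n/2} (n - 2i) * c i`. -/
lemma stepA (n : ℕ) : b n = ∑ i ∈ Finset.range (n / 2 + 1),
    (n - 2 * i) * ∑ ν ∈ binaryPartitions i, ν.parts.count 1 := by
  simp only [Finset.mul_sum]
  rw [← Finset.sum_sigma (Finset.range (n / 2 + 1)) (fun i => binaryPartitions i)
      (fun x => (n - 2 * x.1) * x.2.parts.count 1)]
  unfold b
  refine Finset.sum_bij' (i := fun l hl => toSigma n l)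
    (j := fun x hx => ofSigma n x (by
      rw [Finset.mem_sigma, Finset.mem_range] at hx; omega))
    (fun l hl => toSigma_mem hl)
    (fun x hx => ofSigma_mem x _ (by rw [Finset.mem_sigma] at hx; exact hx.2))
    (fun l hl => left_inv l hl _)
    (fun x hx => right_inv x _ (by rw [Finset.mem_sigma] at hx; exact hx.2))
    (fun l hl => ?_)
  -- value equality: count 1 * count 2 = (n - 2 * (toSigma n l).1) * (toSigma n l).2.count 1
  have h2 : 2 * (toSigma n l).1 ≤ n := by
    have := toSigma_mem hl
    rw [Finset.mem_sigma, Finset.mem_range] at this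
    omega
  have e1 := count_ofSigma_one (toSigma n l) h2
  have e2 := count_ofSigma_two (toSigma n l) h2
  rw [left_inv l hl h2] at e1 e2
  rw [e1, e2]

/-- adding a part equal to 1 -/
noncomputable def addOne (i : ℕ) (μ : Nat.Partition i) : Nat.Partition (i + 1) where
  parts := 1 ::ₘ μ.parts
  parts_pos := by
    intro p hp
    rcases Multiset.mem_cons.mp hp with h | h
    · omega
    · exact μ.parts_pos h
  parts_sum := by rw [Multiset.sum_cons, μ.parts_sum]; omega

/-- removing a part equal to 1 -/
noncomputable def removeOne (i : ℕ) (ν : Nat.Partition (i + 1)) (h : 1 ∈ ν.parts) :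
    Nat.Partition i where
  parts := ν.parts.erase 1
  parts_pos := fun hp => ν.parts_pos (Multiset.mem_of_mem_erase hp)
  parts_sum := by
    have := congrArg Multiset.sum (Multiset.cons_erase h)
    rw [Multiset.sum_cons, ν.parts_sum] at this
    omega

lemma stepB_rec (i : ℕ) :
    ∑ ν ∈ binaryPartitions (i + 1), ν.parts.count 1
      = (∑ μ ∈ binaryPartitions i, μ.parts.count 1) + (binaryPartitions i).card := by
  classical
  rw [← Finset.sum_filter_add_sum_filter_not (binaryPartitions (i + 1))
    (fun ν => 1 ∈ ν.parts) (fun ν => ν.parts.count 1)]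
  have hz : ∑ ν ∈ (binaryPartitions (i + 1)).filter (fun ν => ¬ 1 ∈ ν.parts),
      ν.parts.count 1 = 0 := by
    apply Finset.sum_eq_zero
    intro ν hν
    exact Multiset.count_eq_zero.mpr (Finset.mem_filter.mp hν).2
  rw [hz, add_zero]
  have key : ∑ ν ∈ (binaryPartitions (i + 1)).filter (fun ν => 1 ∈ ν.parts),
      ν.parts.count 1 = ∑ μ ∈ binaryPartitions i, (μ.parts.count 1 + 1) := by
    refine (Finset.sum_bij' (i := fun μ hμ => addOne i μ)
      (j := fun ν hν => removeOne i ν (Finset.mem_filter.mp hν).2)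
      ?_ ?_ ?_ ?_ ?_).symm
    · intro μ hμ
      rw [Finset.mem_filter]
      constructor
      · rw [mem_bp]
        intro p hp
        rcases Multiset.mem_cons.mp hp with h | h
        · exact ⟨0, by rw [h]; rfl⟩
        · exact (mem_bp.mp hμ) p h
      · exact Multiset.mem_cons_self 1 _
    · intro ν hν
      rw [mem_bp]
      intro p hp
      exact (mem_bp.mp (Finset.mem_filter.mp hν).1) p (Multiset.mem_of_mem_erase hp)
    · intro μ hμ
      apply Nat.Partition.ext
      exact Multiset.erase_cons_head 1 μ.parts
    · intro ν hν
      apply Nat.Partition.ext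
      exact Multiset.cons_erase (Finset.mem_filter.mp hν).2
    · intro μ hμ
      exact (Multiset.count_cons_self 1 μ.parts).symm
  rw [key, Finset.sum_add_distrib]
  simp

lemma stepB (i : ℕ) :
    (∑ ν ∈ binaryPartitions i, ν.parts.count 1)
      = ∑ j ∈ Finset.range i, (binaryPartitions j).card := by
  induction i with
  | zero =>
    rw [Finset.range_zero, Finset.sum_empty]
    apply Finset.sum_eq_zero
    intro ν hν
    have : ν.parts = 0 := by
      rw [← Multiset.card_eq_zero]
      by_contra h
      obtain ⟨p, hp⟩ := Multiset.card_pos_iff_exists_mem.mp (Nat.pos_of_ne_zero h)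
      have h1 := ν.parts_pos hp
      have h2 := Multiset.single_le_sum (fun q hq => Nat.zero_le q) p hp
      rw [ν.parts_sum] at h2
      omega
    rw [this]
    rfl
  | succ i ih =>
    rw [stepB_rec, ih, Finset.sum_range_succ]

lemma sumIco (n a B : ℕ) (h : a ≤ B) :
    ∑ i ∈ Finset.Ico a B, ((n : ℤ) - 2 * i)
      = ((B : ℤ) - a) * n - ((B : ℤ) * ((B : ℤ) - 1) - (a : ℤ) * ((a : ℤ) - 1)) := by
  induction B, h using Nat.le_induction with
  | base => simp
  | succ B hB ih =>
    rw [Finset.sum_Ico_succ_top hB, ih]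
    push_cast
    ring

lemma arith (n j : ℕ) (hj : j ≤ n / 2) :
    ∑ i ∈ Finset.Ico (j + 1) (n / 2 + 1), ((n : ℤ) - 2 * i)
      = ((n : ℤ) - 1 - 2 * j) ^ 2 / 4 := by
  rw [sumIco n (j + 1) (n / 2 + 1) (by omega)]
  set t := n / 2 with ht
  have hn : n = 2 * t ∨ n = 2 * t + 1 := by omega
  set s : ℤ := (t : ℤ) - (j : ℤ) with hs
  rcases hn with hn | hn
  · have hni : (n : ℤ) = 2 * t := by exact_mod_cast congrArg (Nat.cast : ℕ → ℤ) hn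
    have h1 : ((n : ℤ) - 1 - 2 * j) ^ 2 = 1 + 4 * (s ^ 2 - s) := by
      rw [hni, hs]; ring
    rw [h1, Int.add_mul_ediv_left _ _ (by norm_num : (4 : ℤ) ≠ 0)]
    rw [show (1 : ℤ) / 4 = 0 by decide, zero_add, hni]
    push_cast
    rw [hs]
    ring
  · have h1 : ((n : ℤ) - 1 - 2 * j) ^ 2 = 4 * s ^ 2 := by
      have : (n : ℤ) = 2 * t + 1 := by exact_mod_cast congrArg (Nat.cast : ℕ → ℤ) hn
      rw [this, hs]; ring
    rw [h1, Int.mul_ediv_cancel_left _ (by norm_num : (4 : ℤ) ≠ 0)]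
    have : (n : ℤ) = 2 * t + 1 := by exact_mod_cast congrArg (Nat.cast : ℕ → ℤ) hn
    rw [this]
    push_cast
    rw [hs]
    ring

theorem stmt_8 (n : ℕ) :
    (b n : ℤ) = ∑ i ∈ Finset.range (n / 2 + 1),
      (((n : ℤ) - 1 - 2 * (i : ℤ)) ^ 2 / 4) * ((binaryPartitions i).card : ℤ) := by
  classical
  have step1 : (b n : ℤ) = ∑ i ∈ Finset.range (n / 2 + 1),
      ((n : ℤ) - 2 * i) * ∑ j ∈ Finset.range i, ((binaryPartitions j).card : ℤ) := by
    rw [stepA n, Nat.cast_sum]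
    apply Finset.sum_congr rfl
    intro i hi
    rw [Finset.mem_range] at hi
    rw [stepB i]
    push_cast [Nat.cast_sub (by omega : 2 * i ≤ n)]
    ring
  rw [step1]
  have step2 : ∀ i ∈ Finset.range (n / 2 + 1),
      ((n : ℤ) - 2 * i) * ∑ j ∈ Finset.range i, ((binaryPartitions j).card : ℤ)
      = ∑ j ∈ Finset.range (n / 2 + 1),
          (if j < i then ((n : ℤ) - 2 * i) * ((binaryPartitions j).card : ℤ) else 0) := by
    intro i hi
    rw [Finset.mem_range] at hi
    rw [Finset.mul_sum]
    rw [← Finset.sum_filter]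
    apply Finset.sum_congr
    · ext j
      simp only [Finset.mem_filter, Finset.mem_range]
      omega
    · intros; rfl
  rw [Finset.sum_congr rfl step2, Finset.sum_comm]
  apply Finset.sum_congr rfl
  intro j hj
  rw [Finset.mem_range] at hj
  have : ∑ i ∈ Finset.range (n / 2 + 1),
      (if j < i then ((n : ℤ) - 2 * i) * ((binaryPartitions j).card : ℤ) else 0)
      = ∑ i ∈ Finset.Ico (j + 1) (n / 2 + 1), ((n : ℤ) - 2 * i) * ((binaryPartitions j).card : ℤ) := by
    rw [← Finset.sum_filter]
    apply Finset.sum_congr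
    · ext i
      simp only [Finset.mem_filter, Finset.mem_range, Finset.mem_Ico]
      omega
    · intros; rfl
  rw [this, ← Finset.sum_mul, arith n j (by omega)]
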